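/- If a decreasing sequence d = (d_1, ..., d_n) of positive integers is graphic, then the sequence (d_1 - 1, d_2, ..., d_{n-1}, d_n - 1), obtained by reducing both d_1 and d_n by one, is also graphic. -/

import Mathlib

set_option maxHeartbeats 800000
open Finset

section
variable {α : Type*} [Fintype α] [DecidableEq α]

lemma deg_eq' (f g : α → Bool) (hfg : ∀ v, (f v = true ↔ g v = true)) :
    (univ.filter (fun w => f w = true)).card = (univ.filter (fun w => g w = true)).card := by
  congr 1
  ext w
  simp [hfg w]

lemma deg_dec' (f g : α → Bool) (p : α) (hp : g p = true)
    (hfg : ∀ v, (f v = true ↔ (v ≠ p ∧ g v = true))) :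
    (univ.filter (fun w => f w = true)).card = (univ.filter (fun w => g w = true)).card - 1 := by
  have hset : univ.filter (fun w => f w = true)
      = (univ.filter (fun w => g w = true)).erase p := by
    ext w
    simp only [mem_filter, mem_univ, true_and, mem_erase, hfg w]
  rw [hset]
  exact card_erase_of_mem (mem_filter.mpr ⟨mem_univ _, hp⟩)

lemma deg_same' (f g : α → Bool) (p q : α)
    (hp : g p = true) (hq : g q = false)
    (hfg : ∀ v, (f v = true ↔ (v = q ∨ (v ≠ p ∧ g v = true)))) :
    (univ.filter (fun w => f w = true)).card = (univ.filter (fun w => g w = true)).card := by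
  have hpmem : p ∈ univ.filter (fun w => g w = true) := mem_filter.mpr ⟨mem_univ _, hp⟩
  have hqnot : q ∉ (univ.filter (fun w => g w = true)).erase p := by
    simp [hq]
  have hset : univ.filter (fun w => f w = true)
      = insert q ((univ.filter (fun w => g w = true)).erase p) := by
    ext w
    simp only [mem_filter, mem_univ, true_and, mem_insert, mem_erase, hfg w]
  have hpos : 1 ≤ (univ.filter (fun w => g w = true)).card :=
    card_pos.mpr ⟨p, hpmem⟩
  rw [hset, card_insert_of_notMem hqnot]
  rw [card_erase_of_mem hpmem]
  omega

end

/-- If a decreasing sequence `d` of positive integers is graphic, then the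
sequence obtained by reducing both `d_1` and `d_n` by one is also graphic. -/
theorem stmt_7 (n : ℕ) (d : Fin n → ℕ) (hd : Antitone d) (hpos : ∀ i, 1 ≤ d i)
    (h : ∃ adj : Fin n → Fin n → Bool,
      (∀ v w, adj v w = adj w v) ∧ (∀ v, adj v v = false) ∧
      (∀ v, (univ.filter (fun w => adj v w = true)).card = d v)) :
    ∃ adj : Fin n → Fin n → Bool,
      (∀ v w, adj v w = adj w v) ∧ (∀ v, adj v v = false) ∧
      (∀ v, (univ.filter (fun w => adj v w = true)).card
        = d v - (if (v : ℕ) = 0 then 1 else 0) - (if (v : ℕ) = n - 1 then 1 else 0)) := by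
  obtain ⟨adj, hs, hi, hdeg⟩ := h
  rcases n with _ | _ | m
  · exact ⟨fun _ _ => false, fun v => v.elim0, fun v => v.elim0, fun v => v.elim0⟩
  · -- n = 1 : impossible since d 0 ≥ 1 but the only vertex has degree 0
    exfalso
    have h0 := hdeg 0
    have hempty : (univ.filter (fun w => adj 0 w = true)) = (∅ : Finset (Fin 1)) := by
      ext w
      simp only [mem_filter, mem_univ, true_and, notMem_empty, iff_false]
      have hw : w = 0 := Fin.ext (by have := w.isLt; omega)
      rw [hw, hi 0]
      simp
    rw [hempty] at h0
    have := hpos 0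
    simp at h0
    omega
  · -- n = m + 2
    set v0 : Fin (m + 2) := ⟨0, by omega⟩ with hv0
    set vl : Fin (m + 2) := ⟨m + 1, by omega⟩ with hvl
    have hv0l : v0 ≠ vl := by
      simp [Fin.ext_iff, hv0, hvl]
    have hval0 : ∀ x : Fin (m + 2), ((x : ℕ) = 0) ↔ x = v0 := by
      intro x; rw [Fin.ext_iff, hv0]
    have e0 : (v0 : ℕ) = 0 := by rw [hv0]
    have eL : (vl : ℕ) = m + 1 := by rw [hvl]
    have hvalL : ∀ x : Fin (m + 2), ((x : ℕ) = m + 1 + 1 - 1) ↔ x = vl := by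
      intro x
      rw [Fin.ext_iff, eL]
      constructor <;> (intro hh; omega)
    by_cases hA : adj v0 vl = true
    · -- simply delete the edge v0–vl
      refine ⟨fun u v => if (u = v0 ∧ v = vl) ∨ (u = vl ∧ v = v0) then false else adj u v,
        ?_, ?_, ?_⟩
      · intro u v
        dsimp only
        exact if_congr (by tauto) rfl (hs u v)
      · intro v
        dsimp only
        split_ifs with h1
        · rfl
        · exact hi v
      · intro v
        dsimp only
        have hAl : adj vl v0 = true := by rw [← hs]; exact hA
        by_cases hv1 : v = v0
        · subst hv1
          have key : ∀ w : Fin (m+2),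
              ((if (v0 = v0 ∧ w = vl) ∨ (v0 = vl ∧ w = v0) then false else adj v0 w) = true
                ↔ (w ≠ vl ∧ adj v0 w = true)) := by
            intro w
            simp only [eq_self_iff_true, true_and]
            split_ifs with h1
            · exact iff_of_false (by simp) (by tauto)
            · tauto
          rw [deg_dec' _ (adj v0) vl hA key, hdeg v0]
          split_ifs <;> omega
        · by_cases hv2 : v = vl
          · subst hv2
            have key : ∀ w : Fin (m+2),
                ((if (vl = v0 ∧ w = vl) ∨ (vl = vl ∧ w = v0) then false else adj vl w) = true
                  ↔ (w ≠ v0 ∧ adj vl w = true)) := by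
              intro w
              simp only [eq_self_iff_true, true_and]
              split_ifs with h1
              · exact iff_of_false (by simp) (by tauto)
              · have := hv0l.symm
                tauto
            rw [deg_dec' _ (adj vl) v0 hAl key, hdeg vl]
            split_ifs <;> simp only [eL] at * <;> omega
          · have key : ∀ w : Fin (m+2),
                ((if (v = v0 ∧ w = vl) ∨ (v = vl ∧ w = v0) then false else adj v w) = true
                  ↔ adj v w = true) := by
              intro w
              split_ifs with h1
              · exact absurd h1 (by tauto)
              · exact Iff.rfl
            have f1 : ¬((v : ℕ) = 0) := fun hh => hv1 ((hval0 v).mp hh)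
            have f2 : ¬((v : ℕ) = m + 1 + 1 - 1) := fun hh => hv2 ((hvalL v).mp hh)
            rw [deg_eq' _ (adj v) key, hdeg v]
            split_ifs <;> omega
    · -- the edge v0–vl is absent: perform a 2-switch
      have hA' : adj v0 vl = false := by simpa using hA
      -- find a neighbour b of vl
      obtain ⟨b, hb⟩ : ∃ b, adj vl b = true := by
        by_contra hc
        push_neg at hc
        have hempty : (univ.filter (fun w => adj vl w = true)) = ∅ := by
          ext w; simpa using hc w
        have h1 := hdeg vl
        rw [hempty] at h1
        have := hpos vl
        simp at h1
        omega
      have hbvl : b ≠ vl := by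
        rintro rfl
        rw [hi] at hb
        simp at hb
      have hbv0 : b ≠ v0 := by
        rintro rfl
        rw [← hs, hA'] at hb
        simp at hb
      -- find a neighbour a of v0 that is not a neighbour of b and differs from b
      obtain ⟨a, ha, hba, hab⟩ : ∃ a, adj v0 a = true ∧ adj b a = false ∧ a ≠ b := by
        by_contra hc
        push_neg at hc
        have hsub : insert vl ((univ.filter (fun w => adj v0 w = true)).erase b)
            ⊆ (univ.filter (fun w => adj b w = true)).erase v0 := by
          intro x hx
          rcases mem_insert.mp hx with rfl | hx
          · refine mem_erase.mpr ⟨hv0l.symm, mem_filter.mpr ⟨mem_univ _, ?_⟩⟩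
            rw [hs]; exact hb
          · obtain ⟨hxb, hxA⟩ := mem_erase.mp hx
            have hx0 : adj v0 x = true := (mem_filter.mp hxA).2
            have hbx : adj b x = true := by
              by_contra hc2
              have : adj b x = false := by simpa using hc2
              exact hxb (hc x hx0 this)
            refine mem_erase.mpr ⟨?_, mem_filter.mpr ⟨mem_univ _, hbx⟩⟩
            rintro rfl
            rw [hi] at hx0
            simp at hx0
        have hcard := card_le_card hsub
        have hvlA : vl ∉ (univ.filter (fun w => adj v0 w = true)).erase b := by
          simp [hA']
        rw [card_insert_of_notMem hvlA] at hcard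
        have hdb : d b ≤ d v0 := hd (by rw [hv0]; exact Fin.zero_le b)
        have hAc := hdeg v0
        have hBc := hdeg b
        have hp0 := hpos v0
        by_cases hvb : adj v0 b = true
        · have h1 : b ∈ univ.filter (fun w => adj v0 w = true) :=
            mem_filter.mpr ⟨mem_univ _, hvb⟩
          have h2 : v0 ∈ univ.filter (fun w => adj b w = true) :=
            mem_filter.mpr ⟨mem_univ _, by rw [← hs]; exact hvb⟩
          rw [card_erase_of_mem h1] at hcard
          have h3 := card_erase_of_mem h2
          omega
        · have h1 : b ∉ univ.filter (fun w => adj v0 w = true) := by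
            simp only [mem_filter, mem_univ, true_and]; exact hvb
          have h2 : v0 ∉ univ.filter (fun w => adj b w = true) := by
            simp only [mem_filter, mem_univ, true_and]
            rw [← hs]; exact hvb
          rw [erase_eq_of_notMem h1, erase_eq_of_notMem h2] at hcard
          omega
      -- basic facts about a and b
      have hav0 : a ≠ v0 := by
        rintro rfl
        rw [hi] at ha
        simp at ha
      have havl : a ≠ vl := by
        rintro rfl
        rw [hA'] at ha
        simp at ha
      have hab' : adj a b = false := by rw [hs]; exact hba
      have hv0a : v0 ≠ a := hav0.symm
      have hv0b : v0 ≠ b := hbv0.symm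
      have hvla : vl ≠ a := havl.symm
      have hvlb : vl ≠ b := hbvl.symm
      have hlv0 : vl ≠ v0 := hv0l.symm
      have hba' : b ≠ a := hab.symm
      -- the switched graph: remove v0–a and vl–b, add a–b
      refine ⟨fun u v =>
        if (u = v0 ∧ v = a) ∨ (u = a ∧ v = v0) ∨ (u = vl ∧ v = b) ∨ (u = b ∧ v = vl)
        then false
        else if (u = a ∧ v = b) ∨ (u = b ∧ v = a) then true else adj u v, ?_, ?_, ?_⟩
      · intro u v
        dsimp only
        exact if_congr (by tauto) rfl (if_congr (by tauto) rfl (hs u v))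
      · intro v
        dsimp only
        split_ifs with h1 h2
        · rfl
        · rcases h2 with ⟨h3, h4⟩ | ⟨h3, h4⟩
          · exact absurd (h3.symm.trans h4) hab
          · exact absurd (h4.symm.trans h3) hab
        · exact hi v
      · intro v
        dsimp only
        by_cases hv1 : v = v0
        · subst hv1
          have key : ∀ w : Fin (m+2),
              ((if (v0 = v0 ∧ w = a) ∨ (v0 = a ∧ w = v0) ∨ (v0 = vl ∧ w = b) ∨ (v0 = b ∧ w = vl)
                then false
                else if (v0 = a ∧ w = b) ∨ (v0 = b ∧ w = a) then true else adj v0 w) = true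
                ↔ (w ≠ a ∧ adj v0 w = true)) := by
            intro w
            simp only [eq_self_iff_true, true_and]
            split_ifs with h1 h2
            · exact iff_of_false (by simp) (by tauto)
            · exact iff_of_true rfl (by tauto)
            · tauto
          rw [deg_dec' _ (adj v0) a ha key, hdeg v0]
          have := hpos v0
          split_ifs <;> omega
        · by_cases hv2 : v = vl
          · subst hv2
            have key : ∀ w : Fin (m+2),
                ((if (vl = v0 ∧ w = a) ∨ (vl = a ∧ w = v0) ∨ (vl = vl ∧ w = b) ∨ (vl = b ∧ w = vl)
                  then false
                  else if (vl = a ∧ w = b) ∨ (vl = b ∧ w = a) then true else adj vl w) = true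
                  ↔ (w ≠ b ∧ adj vl w = true)) := by
              intro w
              simp only [eq_self_iff_true, true_and]
              split_ifs with h1 h2
              · exact iff_of_false (by simp) (by tauto)
              · exact iff_of_true rfl (by tauto)
              · tauto
            rw [deg_dec' _ (adj vl) b hb key, hdeg vl]
            have := hpos vl
            split_ifs <;> simp only [eL] at * <;> omega
          · by_cases hv3 : v = a
            · rw [hv3]
              have hav0' : adj a v0 = true := by rw [← hs]; exact ha
              have key : ∀ w : Fin (m+2),
                  ((if (a = v0 ∧ w = a) ∨ (a = a ∧ w = v0) ∨ (a = vl ∧ w = b) ∨ (a = b ∧ w = vl)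
                    then false
                    else if (a = a ∧ w = b) ∨ (a = b ∧ w = a) then true else adj a w) = true
                    ↔ (w = b ∨ (w ≠ v0 ∧ adj a w = true))) := by
                intro w
                simp only [eq_self_iff_true, true_and]
                split_ifs with h1 h2
                · exact iff_of_false (by simp) (by rintro (rfl | ⟨hne, _⟩) <;> tauto)
                · exact iff_of_true rfl (by tauto)
                · tauto
              have f1 : ¬((a : ℕ) = 0) := fun hh => hav0 ((hval0 a).mp hh)
              have f2 : ¬((a : ℕ) = m + 1 + 1 - 1) := fun hh => havl ((hvalL a).mp hh)
              rw [deg_same' _ (adj a) v0 b hav0' hab' key, hdeg a]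
              split_ifs <;> omega
            · by_cases hv4 : v = b
              · rw [hv4]
                have hbvl' : adj b vl = true := by rw [← hs]; exact hb
                have key : ∀ w : Fin (m+2),
                    ((if (b = v0 ∧ w = a) ∨ (b = a ∧ w = v0) ∨ (b = vl ∧ w = b) ∨ (b = b ∧ w = vl)
                      then false
                      else if (b = a ∧ w = b) ∨ (b = b ∧ w = a) then true else adj b w) = true
                      ↔ (w = a ∨ (w ≠ vl ∧ adj b w = true))) := by
                  intro w
                  simp only [eq_self_iff_true, true_and]
                  split_ifs with h1 h2
                  · exact iff_of_false (by simp) (by rintro (rfl | ⟨hne, _⟩) <;> tauto)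
                  · exact iff_of_true rfl (by tauto)
                  · tauto
                have f1 : ¬((b : ℕ) = 0) := fun hh => hbv0 ((hval0 b).mp hh)
                have f2 : ¬((b : ℕ) = m + 1 + 1 - 1) := fun hh => hbvl ((hvalL b).mp hh)
                rw [deg_same' _ (adj b) vl a hbvl' hba key, hdeg b]
                split_ifs <;> omega
              · have key : ∀ w : Fin (m+2),
                    ((if (v = v0 ∧ w = a) ∨ (v = a ∧ w = v0) ∨ (v = vl ∧ w = b) ∨ (v = b ∧ w = vl)
                      then false
                      else if (v = a ∧ w = b) ∨ (v = b ∧ w = a) then true else adj v w) = true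
                      ↔ adj v w = true) := by
                  intro w
                  split_ifs with h1 h2
                  · exact absurd h1 (by tauto)
                  · exact absurd h2 (by tauto)
                  · exact Iff.rfl
                have f1 : ¬((v : ℕ) = 0) := fun hh => hv1 ((hval0 v).mp hh)
                have f2 : ¬((v : ℕ) = m + 1 + 1 - 1) := fun hh => hv2 ((hvalL v).mp hh)
                rw [deg_eq' _ (adj v) key, hdeg v]
                split_ifs <;> omega
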